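/- Let x_1, …, x_r ∈ ℤ^n be vectors whose ℝ-linear span is all of ℝ^n, and suppose that every n-element linearly independent subset of {x_1, …, x_r} is a ℤ-basis of ℤ^n (the unimodularity condition). Then for every linearly independent subset {x_{j_1}, …, x_{j_i}} ⊆ {x_1, …, x_r}, the vectors x_{j_1}, …, x_{j_i} form a ℤ-basis of the subgroup span_ℝ{x_{j_1}, …, x_{j_i}} ∩ ℤ^n. -/

import Mathlib

/-!
Statement 3: if `x 1, …, x r ∈ ℤ^n` span `ℝ^n` and every `n`-element linearly
independent subfamily is a `ℤ`-basis of `ℤ^n` (unimodularity), then every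
linearly independent subfamily `x (g 1), …, x (g k)` is a `ℤ`-basis of the
subgroup `span_ℝ {x (g j)} ∩ ℤ^n`.
-/

/-- The inclusion of the standard lattice `ℤ^n` into `ℝ^n`. -/
def ivec {n : ℕ} (m : Fin n → ℤ) : Fin n → ℝ := fun j => (m j : ℝ)

theorem unimodular_sub_bases (n r : ℕ) (hn : 0 < n) (hr : n ≤ r)
    (x : Fin r → Fin n → ℤ)
    (hspan : Submodule.span ℝ (Set.range fun i => ivec (x i)) = ⊤)
    (huni : ∀ g : Fin n → Fin r,
      LinearIndependent ℝ (fun i => ivec (x (g i))) →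
      ∀ m : Fin n → ℤ, ∃! c : Fin n → ℤ, m = ∑ i, c i • x (g i)) :
    ∀ (k : ℕ) (g : Fin k → Fin r),
      LinearIndependent ℝ (fun i => ivec (x (g i))) →
      ∀ m : Fin n → ℤ,
        ivec m ∈ Submodule.span ℝ (Set.range fun i => ivec (x (g i))) →
        ∃! c : Fin k → ℤ, m = ∑ i, c i • x (g i) := by
  classical
  have ivec_inj : Function.Injective (ivec (n := n)) := by
    intro a b hab; funext j
    have := congrFun hab j
    simp only [ivec] at this
    exact_mod_cast this
  have ivec_sum : ∀ (N : ℕ) (f : Fin N → Fin n → ℤ) (c : Fin N → ℤ),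
      ivec (∑ i, c i • f i) = ∑ i, (c i : ℝ) • ivec (f i) := by
    intro N f c; funext j
    simp only [ivec, Finset.sum_apply, Pi.smul_apply, smul_eq_mul]
    push_cast; rfl
  have uniq : ∀ {N : ℕ} (f : Fin N → Fin r),
      LinearIndependent ℝ (fun i => ivec (x (f i))) →
      ∀ c c' : Fin N → ℤ, ∑ i, c i • x (f i) = ∑ i, c' i • x (f i) → c = c' := by
    intro N f hf c c' hcc
    have h2 : ∑ i, ((c i : ℝ) - (c' i : ℝ)) • ivec (x (f i)) = 0 := by
      have h3 := congrArg ivec hcc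
      rw [ivec_sum, ivec_sum] at h3
      simp only [sub_smul]
      rw [Finset.sum_sub_distrib, h3, sub_self]
    have h4 := Fintype.linearIndependent_iff.mp hf _ h2
    funext i
    have := sub_eq_zero.mp (h4 i)
    exact_mod_cast this
  intro k g hg m hm
  set s : Set (Fin n → ℝ) := Set.range (fun i => ivec (x (g i))) with hs_def
  set t : Set (Fin n → ℝ) := Set.range (fun i => ivec (x i)) with ht_def
  have hst : s ⊆ t := by rintro _ ⟨i, rfl⟩; exact ⟨g i, rfl⟩
  have hsli : LinearIndependent ℝ ((↑) : s → (Fin n → ℝ)) := (linearIndepOn_id_range_iff hg.injective).mpr hg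
  set b : Set (Fin n → ℝ) := (show LinearIndepOn ℝ id s from hsli).extend hst with hb_def
  have hsb : s ⊆ b := (show LinearIndepOn ℝ id s from hsli).subset_extend hst
  have hbt : b ⊆ t := (show LinearIndepOn ℝ id s from hsli).extend_subset hst
  have hbli : LinearIndependent ℝ ((↑) : b → (Fin n → ℝ)) := (show LinearIndepOn ℝ id s from hsli).linearIndepOn_extend hst
  have hbspan : Submodule.span ℝ b = ⊤ := by
    rw [← top_le_iff, ← hspan]
    exact Submodule.span_le.2 ((show LinearIndepOn ℝ id s from hsli).subset_span_extend hst)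
  have hbfin : b.Finite := (Set.finite_range _).subset hbt
  haveI : Fintype b := hbfin.fintype
  let Bb : Module.Basis b ℝ (Fin n → ℝ) := Module.Basis.mk hbli (by rw [Subtype.range_coe, hbspan])
  have hcard : Fintype.card b = n := by
    have h1 := Module.finrank_eq_card_basis Bb
    simpa using h1.symm
  let e : Fin n ≃ b := (Fintype.equivFinOfCardEq hcard).symm
  have hchoice : ∀ y : b, ∃ i : Fin r, ivec (x i) = (y : Fin n → ℝ) := fun y => hbt y.2
  let h : Fin n → Fin r := fun i => (hchoice (e i)).choose
  have hh : ∀ i, ivec (x (h i)) = ((e i : b) : Fin n → ℝ) := fun i => (hchoice (e i)).choose_spec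
  have hli : LinearIndependent ℝ (fun i => ivec (x (h i))) := by
    have : (fun i => ivec (x (h i))) = ((↑) : b → (Fin n → ℝ)) ∘ e := funext hh
    rw [this]
    exact hbli.comp e e.injective
  haveI : Nonempty (Fin n) := ⟨⟨0, hn⟩⟩
  let B : Module.Basis (Fin n) ℝ (Fin n → ℝ) :=
    basisOfLinearIndependentOfCardEqFinrank hli (by simp)
  have hB : ∀ i, B i = ivec (x (h i)) := fun i =>
    congrFun (coe_basisOfLinearIndependentOfCardEqFinrank hli _) i
  let φ : Fin k → Fin n := fun j => e.symm ⟨ivec (x (g j)), hsb ⟨j, rfl⟩⟩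
  have hφ : ∀ j, ivec (x (h (φ j))) = ivec (x (g j)) := by
    intro j
    rw [hh]
    simp [φ, e.apply_symm_apply]
  have hxφ : ∀ j, x (h (φ j)) = x (g j) := fun j => ivec_inj (hφ j)
  have hφinj : Function.Injective φ := by
    intro j j' hjj
    have : ivec (x (g j)) = ivec (x (g j')) := by
      rw [← hφ j, ← hφ j', hjj]
    exact hg.injective this
  obtain ⟨c, hc, -⟩ := huni h hli m
  -- coefficients outside range φ vanish
  have hczero : ∀ i, i ∉ Set.range φ → c i = 0 := by
    intro i hi
    have hmem : ivec m ∈ Submodule.span ℝ (B '' Set.range φ) := by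
      refine Submodule.span_mono ?_ hm
      rintro _ ⟨j, rfl⟩
      exact ⟨φ j, ⟨j, rfl⟩, by rw [hB, hφ]⟩
    have hsupp := B.mem_span_image.mp hmem
    have hmeq : ivec m = ∑ i, (c i : ℝ) • B i := by
      rw [hc, ivec_sum]
      exact Finset.sum_congr rfl fun i _ => by rw [hB]
    have hrepr : ∀ i, B.repr (ivec m) i = (c i : ℝ) := by
      intro i
      rw [hmeq]
      exact congrFun (B.repr_sum_self fun i => (c i : ℝ)) i
    have hzero : (c i : ℝ) = 0 := by
      by_contra hne
      exact hi (hsupp (Finset.mem_coe.mpr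
        (Finsupp.mem_support_iff.mpr (by rw [hrepr i]; exact hne))))
    exact_mod_cast hzero
  have hmg : m = ∑ j, c (φ j) • x (g j) := by
    have hsum : ∑ i, c i • x (h i) = ∑ j, c (φ j) • x (h (φ j)) := by
      rw [← Finset.sum_image (g := φ) (f := fun i => c i • x (h i))
        (fun j _ j' _ hjj => hφinj hjj)]
      refine (Finset.sum_subset (Finset.subset_univ _) ?_).symm
      intro i _ hi
      have hnr : i ∉ Set.range φ := by
        intro ⟨j, hj⟩
        exact hi (Finset.mem_image.mpr ⟨j, Finset.mem_univ j, hj⟩)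
      rw [hczero i hnr, zero_smul]
    rw [hc, hsum]
    exact Finset.sum_congr rfl fun j _ => by rw [hxφ]
  refine ⟨fun j => c (φ j), hmg, ?_⟩
  intro c'' h''
  exact uniq g hg c'' (fun j => c (φ j)) (h'' ▸ hmg ▸ rfl)
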